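/- Let S be a semigroup, A a finite set, and suppose there exists a finite K ⊆ S with S = K·S. Let X ⊆ A^S be a subshift. If the dynamical system (X,S) has the pseudo-orbit tracing property, then X is a subshift of finite type. -/

import Mathlib

open Filter Pointwise Uniformity

/-- Let `S` be a semigroup with a finite `K ⊆ S` such that `S = K·S`, `A` a finite set,
and `X ⊆ A^S` a subshift. If `(X,S)` has the pseudo-orbit tracing property, then `X` is a
subshift of finite type. -/
theorem stmt_8 {S A : Type*} [Semigroup S] [Finite A] [UniformSpace A] [DiscreteTopology A]
    (K : Finset S) (hK : ∀ s : S, ∃ k ∈ K, ∃ t : S, s = k * t)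
    (X : Set (S → A)) (hXc : IsClosed X)
    (hinv : ∀ (s : S) (x : S → A), x ∈ X → (fun t => x (t * s)) ∈ X)
    (hpotp : ∀ U ∈ uniformity {x // x ∈ X}, ∃ T : Finset S, ∃ V ∈ uniformity {x // x ∈ X},
        ∀ xs : S → {x // x ∈ X},
          (∀ t ∈ T, ∀ s : S,
            ((⟨fun u => (xs s).1 (u * t), hinv t _ (xs s).2⟩ : {x // x ∈ X}), xs (t * s)) ∈ V) →
          ∃ x : {x // x ∈ X}, ∀ s : S,
            ((⟨fun u => x.1 (u * s), hinv s _ x.2⟩ : {x // x ∈ X}), xs s) ∈ U) :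
    ∃ (W : Finset S) (P : Set (∀ _ : (W : Set S), A)),
      X = {x : S → A | ∀ s : S, (fun w : (W : Set S) => x (w.1 * s)) ∈ P} := by
  classical
  set X' := {x // x ∈ X}
  -- A is finite discrete, hence the identity relation is an entourage
  have hA : SetRel.id ∈ 𝓤 A := by
    rw [compactSpace_uniformity]
    exact Filter.mem_iSup.2 fun x => IsOpen.mem_nhds (isOpen_discrete _) rfl
  have hAeq : 𝓤 A = 𝓟 SetRel.id :=
    le_antisymm (Filter.le_principal_iff.2 hA) refl_le_uniformity
  -- basic entourages of X
  have hE : ∀ F : Finset S,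
      {p : X' × X' | ∀ f ∈ F, p.1.1 f = p.2.1 f} ∈ 𝓤 X' := by
    intro F
    have : {p : X' × X' | ∀ f ∈ F, p.1.1 f = p.2.1 f}
        = ⋂ f ∈ F, {p : X' × X' | p.1.1 f = p.2.1 f} := by
      ext p; simp
    rw [this]
    refine (Filter.biInter_finset_mem F).2 fun f _ => ?_
    have hg : UniformContinuous fun x : X' => x.1 f :=
      (Pi.uniformContinuous_proj _ f).comp uniformContinuous_subtype_val
    exact hg hA
  -- every entourage of X contains a basic one
  have hbasis : ∀ V ∈ 𝓤 X', ∃ F : Finset S,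
      ∀ p : X' × X', (∀ f ∈ F, p.1.1 f = p.2.1 f) → p ∈ V := by
    intro V hV
    rw [uniformity_setCoe, Filter.mem_comap] at hV
    obtain ⟨V', hV', hsub⟩ := hV
    have hpi : 𝓤 (S → A) = ⨅ s : S, 𝓟 {p : (S → A) × (S → A) | p.1 s = p.2 s} := by
      rw [Pi.uniformity]
      congr 1
      ext s
      rw [hAeq, Filter.comap_principal]
      rfl
    rw [hpi] at hV'
    obtain ⟨t, htfin, ht⟩ :=
      (Filter.hasBasis_iInf_principal_finite
        (fun s : S => {p : (S → A) × (S → A) | p.1 s = p.2 s})).mem_iff.1 hV'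
    refine ⟨htfin.toFinset, fun p hp => ?_⟩
    apply hsub
    apply ht
    simp only [Set.mem_iInter]
    intro f hf
    exact hp f (htfin.mem_toFinset.2 hf)
  -- apply POTP to the entourage given by K
  obtain ⟨T, V, hV, hpo⟩ := hpotp _ (hE K)
  obtain ⟨F, hF⟩ := hbasis V hV
  set W : Finset S := K ∪ F ∪ F * T with hW
  have hKW : ∀ k ∈ K, k ∈ W := fun k hk =>
    Finset.mem_union_left _ (Finset.mem_union_left _ hk)
  have hFW : ∀ f ∈ F, f ∈ W := fun f hf =>
    Finset.mem_union_left _ (Finset.mem_union_right _ hf)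
  have hFTW : ∀ f ∈ F, ∀ t ∈ T, f * t ∈ W := fun f hf t ht =>
    Finset.mem_union_right _ (Finset.mul_mem_mul hf ht)
  refine ⟨W, {p | ∃ y ∈ X, ∀ w : (W : Set S), y w.1 = p w}, ?_⟩
  apply Set.Subset.antisymm
  · intro x hx s
    exact ⟨fun t => x (t * s), hinv s x hx, fun w => rfl⟩
  · intro x₀ hx₀
    choose y hyX hy using hx₀
    set xs : S → X' := fun s => ⟨y s, hyX s⟩ with hxs
    have hcond : ∀ t ∈ T, ∀ s : S,
        ((⟨fun u => (xs s).1 (u * t), hinv t _ (xs s).2⟩ : X'), xs (t * s)) ∈ V := by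
      intro t ht s
      apply hF
      intro f hf
      show y s (f * t) = y (t * s) f
      have h1 := hy s ⟨f * t, hFTW f hf t ht⟩
      have h2 := hy (t * s) ⟨f, hFW f hf⟩
      simp only at h1 h2
      rw [h1, h2, mul_assoc]
    obtain ⟨x, hx⟩ := hpo xs hcond
    have : x₀ = x.1 := by
      funext u
      obtain ⟨k, hk, t, rfl⟩ := hK u
      have h1 : x.1 (k * t) = (xs t).1 k := hx t k hk
      have h2 := hy t ⟨k, hKW k hk⟩
      simp only at h2
      rw [h1]
      exact h2.symm ▸ rfl
    rw [this]
    exact x.2
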